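/- For every integer n ≥ 1, all x, x′ ∈ L_n and all y ∈ W_n, the graph distance in G_n satisfies: dist(d_x, c_y) = 1 if x is a prefix of y and dist(d_x, c_y) = 3 otherwise; dist(d_x, b_y) = 2; dist(d_x, a_{x′}) = 3; and for x ≠ x′, dist(d_x, d_{x′}) = 2 if one of x, x′ is a prefix of the other and dist(d_x, d_{x′}) = 4 otherwise. -/

import Mathlib

/-- `L n`: binary words of length at most `n` that are empty or end in `1` (`true`). -/
abbrev Ln (n : ℕ) := {x : List Bool // x.length ≤ n ∧ (x = [] ∨ x.getLast? = some true)}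

/-- `W n`: binary words of length exactly `n`. -/
abbrev Wn (n : ℕ) := {y : List Bool // y.length = n}

/-- Vertex set of the graph `G_n`: a copy of `L n` (the `a` vertices), two copies of `W n`
(the `b` and `c` vertices) and another copy of `L n` (the `d` vertices). -/
abbrev VGn (n : ℕ) := Ln n ⊕ Wn n ⊕ Wn n ⊕ Ln n

def va {n : ℕ} (x : Ln n) : VGn n := Sum.inl x
def vb {n : ℕ} (y : Wn n) : VGn n := Sum.inr (Sum.inl y)
def vc {n : ℕ} (y : Wn n) : VGn n := Sum.inr (Sum.inr (Sum.inl y))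
def vd {n : ℕ} (x : Ln n) : VGn n := Sum.inr (Sum.inr (Sum.inr x))

/-- The graph `G_n`: edges `b_y c_z` for all `y, z ∈ W n`, `a_x b_y` whenever `x` is a
prefix of `y`, and `d_x c_y` whenever `x` is a prefix of `y`. -/
def Gn (n : ℕ) : SimpleGraph (VGn n) where
  Adj u v :=
    match u, v with
    | Sum.inl x, Sum.inr (Sum.inl y) => x.1 <+: y.1
    | Sum.inr (Sum.inl y), Sum.inl x => x.1 <+: y.1
    | Sum.inr (Sum.inl _), Sum.inr (Sum.inr (Sum.inl _)) => True
    | Sum.inr (Sum.inr (Sum.inl _)), Sum.inr (Sum.inl _) => True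
    | Sum.inr (Sum.inr (Sum.inl y)), Sum.inr (Sum.inr (Sum.inr x)) => x.1 <+: y.1
    | Sum.inr (Sum.inr (Sum.inr x)), Sum.inr (Sum.inr (Sum.inl y)) => x.1 <+: y.1
    | _, _ => False
  symm := by
    constructor
    rintro (x | y | z | w) (x' | y' | z' | w') h <;> exact h
  loopless := by
    constructor
    rintro (x | y | z | w) h <;> exact h

namespace Stmt10Aux

open SimpleGraph

/-- Bipartite coloring of `VGn`. -/
def colV {n : ℕ} : VGn n → Bool
  | Sum.inl _ => true
  | Sum.inr (Sum.inl _) => false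
  | Sum.inr (Sum.inr (Sum.inl _)) => true
  | Sum.inr (Sum.inr (Sum.inr _)) => false

lemma colV_adj {n : ℕ} {u v : VGn n} (h : (Gn n).Adj u v) : colV u ≠ colV v := by
  rcases u with x | y | z | w <;> rcases v with x' | y' | z' | w' <;>
    simp_all [Gn, colV]

lemma walk_parity {n : ℕ} : ∀ {u v : VGn n} (p : (Gn n).Walk u v),
    (colV u = colV v ↔ Even p.length)
  | _, _, .nil => by simp
  | _, _, .cons h q => by
    have ih := walk_parity q
    have hc := colV_adj h
    simp only [SimpleGraph.Walk.length_cons, Nat.even_add_one, ← ih]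
    revert hc ih
    rename_i u w v
    cases hu : colV u <;> cases hw : colV w <;> cases hv : colV v <;> simp

lemma dist_parity {n : ℕ} {u v : VGn n} (h : (Gn n).Reachable u v) :
    (colV u = colV v ↔ Even ((Gn n).dist u v)) := by
  obtain ⟨p, hp⟩ := h.exists_walk_length_eq_dist
  rw [← hp]; exact walk_parity p

lemma exists_mid {n : ℕ} {u v : VGn n} (h : (Gn n).dist u v = 2) :
    ∃ w, (Gn n).Adj u w ∧ (Gn n).Adj w v := by
  obtain ⟨p, hp⟩ := SimpleGraph.exists_walk_of_dist_ne_zero (by omega : (Gn n).dist u v ≠ 0)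
  rw [h] at hp
  cases p with
  | nil => simp at hp
  | cons h1 q =>
    cases q with
    | nil => simp at hp
    | cons h2 r =>
      simp [SimpleGraph.Walk.length_cons] at hp
      have := hp.eq
      subst this
      exact ⟨_, h1, h2⟩

/-- Extend an element of `Ln n` to a word of length `n`. -/
def extL {n : ℕ} (x : Ln n) : Wn n :=
  ⟨x.1 ++ List.replicate (n - x.1.length) false, by
    have := x.2.1
    simp only [List.length_append, List.length_replicate]
    omega⟩

lemma extL_prefix {n : ℕ} (x : Ln n) : x.1 <+: (extL x).1 :=
  List.prefix_append _ _

lemma adj_dc {n : ℕ} {x : Ln n} {z : Wn n} (h : x.1 <+: z.1) :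
    (Gn n).Adj (vd x) (vc z) := h

lemma adj_cd {n : ℕ} {x : Ln n} {z : Wn n} (h : x.1 <+: z.1) :
    (Gn n).Adj (vc z) (vd x) := h

lemma adj_cb {n : ℕ} (z y : Wn n) : (Gn n).Adj (vc z) (vb y) := trivial

lemma adj_bc {n : ℕ} (y z : Wn n) : (Gn n).Adj (vb y) (vc z) := trivial

lemma adj_ba {n : ℕ} {y : Wn n} {x : Ln n} (h : x.1 <+: y.1) :
    (Gn n).Adj (vb y) (va x) := h

end Stmt10Aux

open Stmt10Aux

/-- Distances from `d` vertices in `G_n` (`n ≥ 1`): `dist(d_x, c_y)` is `1` or `3`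
according to whether `x` is a prefix of `y`; `dist(d_x, b_y) = 2`; `dist(d_x, a_x') = 3`;
and for `x ≠ x'`, `dist(d_x, d_x')` is `2` or `4` according to whether one of `x, x'`
is a prefix of the other. -/
theorem stmt10 (n : ℕ) (hn : 1 ≤ n) (x x' : Ln n) (y : Wn n) :
    ((x.1 <+: y.1 → (Gn n).dist (vd x) (vc y) = 1) ∧
     (¬ x.1 <+: y.1 → (Gn n).dist (vd x) (vc y) = 3)) ∧
    (Gn n).dist (vd x) (vb y) = 2 ∧
    (Gn n).dist (vd x) (va x') = 3 ∧
    (x ≠ x' →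
      ((x.1 <+: x'.1 ∨ x'.1 <+: x.1) → (Gn n).dist (vd x) (vd x') = 2) ∧
      (¬ (x.1 <+: x'.1 ∨ x'.1 <+: x.1) → (Gn n).dist (vd x) (vd x') = 4)) := by  classical
  have hxe := extL_prefix x
  have hx'e := extL_prefix x'
  have hdc3 : ¬ x.1 <+: y.1 → (Gn n).dist (vd x) (vc y) = 3 := by
    intro hnp
    have hle : (Gn n).dist (vd x) (vc y) ≤ 3 :=
      SimpleGraph.dist_le (.cons (adj_dc hxe) (.cons (adj_cb _ y) (.cons (adj_bc y y) .nil)))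
    have hreach : (Gn n).Reachable (vd x) (vc y) :=
      ⟨.cons (adj_dc hxe) (.cons (adj_cb _ y) (.cons (adj_bc y y) .nil))⟩
    have hodd : ¬ Even ((Gn n).dist (vd x) (vc y)) := by
      intro he
      have := (dist_parity hreach).mpr he
      simp [colV, vd, vc] at this
    have hne1 : (Gn n).dist (vd x) (vc y) ≠ 1 := fun h1 =>
      hnp (SimpleGraph.dist_eq_one_iff_adj.mp h1)
    have hmod := Nat.odd_iff.mp (Nat.not_even_iff_odd.mp hodd)
    omega
  refine ⟨⟨fun hp => SimpleGraph.dist_eq_one_iff_adj.mpr (adj_dc hp), hdc3⟩, ?_, ?_, ?_⟩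
  · -- dist d b = 2
    have hle : (Gn n).dist (vd x) (vb y) ≤ 2 :=
      SimpleGraph.dist_le (.cons (adj_dc hxe) (.cons (adj_cb _ y) .nil))
    have hreach : (Gn n).Reachable (vd x) (vb y) :=
      ⟨.cons (adj_dc hxe) (.cons (adj_cb _ y) .nil)⟩
    have hne0 : (Gn n).dist (vd x) (vb y) ≠ 0 :=
      SimpleGraph.dist_ne_zero_iff_ne_and_reachable.mpr ⟨by simp [vd, vb], hreach⟩
    have heven : Even ((Gn n).dist (vd x) (vb y)) :=
      (dist_parity hreach).mp (by simp [colV, vd, vb])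
    have hmod := Nat.even_iff.mp heven
    omega
  · -- dist d a = 3
    have hle : (Gn n).dist (vd x) (va x') ≤ 3 :=
      SimpleGraph.dist_le
        (.cons (adj_dc hxe) (.cons (adj_cb _ (extL x')) (.cons (adj_ba hx'e) .nil)))
    have hreach : (Gn n).Reachable (vd x) (va x') :=
      ⟨.cons (adj_dc hxe) (.cons (adj_cb _ (extL x')) (.cons (adj_ba hx'e) .nil))⟩
    have hodd : ¬ Even ((Gn n).dist (vd x) (va x')) := by
      intro he
      have := (dist_parity hreach).mpr he
      simp [colV, vd, va] at this
    have hne1 : (Gn n).dist (vd x) (va x') ≠ 1 := by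
      intro h1
      have h2 := SimpleGraph.dist_eq_one_iff_adj.mp h1
      exact h2
    have hmod := Nat.odd_iff.mp (Nat.not_even_iff_odd.mp hodd)
    omega
  · -- dist d d'
    intro hne
    have hnedd : vd x ≠ vd x' := by
      simp only [vd, ne_eq, Sum.inr.injEq]
      exact hne
    constructor
    · rintro (hp | hp)
      · have hle : (Gn n).dist (vd x) (vd x') ≤ 2 :=
          SimpleGraph.dist_le (.cons (adj_dc (hp.trans hx'e)) (.cons (adj_cd hx'e) .nil))
        have hreach : (Gn n).Reachable (vd x) (vd x') :=
          ⟨.cons (adj_dc (hp.trans hx'e)) (.cons (adj_cd hx'e) .nil)⟩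
        have hne0 : (Gn n).dist (vd x) (vd x') ≠ 0 :=
          SimpleGraph.dist_ne_zero_iff_ne_and_reachable.mpr ⟨hnedd, hreach⟩
        have heven : Even ((Gn n).dist (vd x) (vd x')) :=
          (dist_parity hreach).mp (by simp [colV, vd])
        have hmod := Nat.even_iff.mp heven
        omega
      · have hle : (Gn n).dist (vd x) (vd x') ≤ 2 :=
          SimpleGraph.dist_le (.cons (adj_dc hxe) (.cons (adj_cd (hp.trans hxe)) .nil))
        have hreach : (Gn n).Reachable (vd x) (vd x') :=
          ⟨.cons (adj_dc hxe) (.cons (adj_cd (hp.trans hxe)) .nil)⟩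
        have hne0 : (Gn n).dist (vd x) (vd x') ≠ 0 :=
          SimpleGraph.dist_ne_zero_iff_ne_and_reachable.mpr ⟨hnedd, hreach⟩
        have heven : Even ((Gn n).dist (vd x) (vd x')) :=
          (dist_parity hreach).mp (by simp [colV, vd])
        have hmod := Nat.even_iff.mp heven
        omega
    · intro hnp
      have hle : (Gn n).dist (vd x) (vd x') ≤ 4 :=
        SimpleGraph.dist_le (.cons (adj_dc hxe) (.cons (adj_cb _ (extL x'))
          (.cons (adj_bc _ _) (.cons (adj_cd hx'e) .nil))))
      have hreach : (Gn n).Reachable (vd x) (vd x') :=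
        ⟨.cons (adj_dc hxe) (.cons (adj_cb _ (extL x'))
          (.cons (adj_bc _ _) (.cons (adj_cd hx'e) .nil)))⟩
      have hne0 : (Gn n).dist (vd x) (vd x') ≠ 0 :=
        SimpleGraph.dist_ne_zero_iff_ne_and_reachable.mpr ⟨hnedd, hreach⟩
      have heven : Even ((Gn n).dist (vd x) (vd x')) :=
        (dist_parity hreach).mp (by simp [colV, vd])
      have hne2 : (Gn n).dist (vd x) (vd x') ≠ 2 := by
        intro h2
        obtain ⟨w, h1, h2'⟩ := exists_mid h2
        rcases w with a | b | c | d
        · exact h1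
        · exact h1
        · have hxc : x.1 <+: c.1 := h1
          have hx'c : x'.1 <+: c.1 := (Gn n).adj_symm h2'
          exact hnp (List.prefix_or_prefix_of_prefix hxc hx'c)
        · exact h1
      have hmod := Nat.even_iff.mp heven
      omega
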